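/- Suppose (x_i)_{i∈I} and (y_i)_{i∈I} are real numbers indexed by a finite nonempty set I such that |x_i − x| ≤ δ₁ and |y_i − y| ≤ δ₂ for some x, y ∈ ℝ and every i ∈ I. Then |Σ_{i∈I} x_i y_i − (1/|I|)(Σ_{i∈I} x_i)(Σ_{i∈I} y_i)| ≤ 2 |I| δ₁ δ₂. -/

import Mathlib

/-- If `|xᵢ - x| ≤ δ₁` and `|yᵢ - y| ≤ δ₂` for all `i` in a finite
nonempty index set `I`, then
`|∑ xᵢ yᵢ - (∑ xᵢ)(∑ yᵢ)/|I|| ≤ 2 |I| δ₁ δ₂`. -/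
theorem sum_prod_approx {ι : Type*} (I : Finset ι) (hI : I.Nonempty)
    (xf yf : ι → ℝ) (x y δ₁ δ₂ : ℝ)
    (hx : ∀ i ∈ I, |xf i - x| ≤ δ₁) (hy : ∀ i ∈ I, |yf i - y| ≤ δ₂) :
    |(∑ i ∈ I, xf i * yf i) - (∑ i ∈ I, xf i) * (∑ i ∈ I, yf i) / (I.card : ℝ)| ≤
      2 * (I.card : ℝ) * δ₁ * δ₂ := by
  have hn : (0:ℝ) < I.card := by exact_mod_cast Finset.card_pos.mpr hI
  have hn' : (I.card : ℝ) ≠ 0 := ne_of_gt hn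
  set a : ι → ℝ := fun i => xf i - x with ha
  set b : ι → ℝ := fun i => yf i - y with hb
  have hδ₁ : 0 ≤ δ₁ := le_trans (abs_nonneg _) (hx _ hI.choose_spec)
  have hδ₂ : 0 ≤ δ₂ := le_trans (abs_nonneg _) (hy _ hI.choose_spec)
  have hsx : ∑ i ∈ I, xf i = (I.card : ℝ) * x + ∑ i ∈ I, a i := by
    simp [ha, Finset.sum_sub_distrib, mul_comm]
  have hsy : ∑ i ∈ I, yf i = (I.card : ℝ) * y + ∑ i ∈ I, b i := by
    simp [hb, Finset.sum_sub_distrib, mul_comm]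
  have hsxy : ∑ i ∈ I, xf i * yf i =
      (I.card : ℝ) * (x * y) + x * (∑ i ∈ I, b i) + y * (∑ i ∈ I, a i)
        + ∑ i ∈ I, a i * b i := by
    have : ∀ i ∈ I, xf i * yf i = x * y + x * b i + y * a i + a i * b i := by
      intro i _; simp [ha, hb]; ring
    rw [Finset.sum_congr rfl this]
    simp [Finset.sum_add_distrib, Finset.mul_sum]
  have key : (∑ i ∈ I, xf i * yf i) - (∑ i ∈ I, xf i) * (∑ i ∈ I, yf i) / (I.card : ℝ)
      = (∑ i ∈ I, a i * b i) - (∑ i ∈ I, a i) * (∑ i ∈ I, b i) / (I.card : ℝ) := by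
    rw [hsx, hsy, hsxy]; field_simp; ring
  rw [key]
  have hA : |∑ i ∈ I, a i| ≤ (I.card : ℝ) * δ₁ := by
    calc |∑ i ∈ I, a i| ≤ ∑ i ∈ I, |a i| := Finset.abs_sum_le_sum_abs _ _
    _ ≤ ∑ i ∈ I, δ₁ := Finset.sum_le_sum (fun i hi => hx i hi)
    _ = (I.card : ℝ) * δ₁ := by simp [mul_comm]
  have hB : |∑ i ∈ I, b i| ≤ (I.card : ℝ) * δ₂ := by
    calc |∑ i ∈ I, b i| ≤ ∑ i ∈ I, |b i| := Finset.abs_sum_le_sum_abs _ _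
    _ ≤ ∑ i ∈ I, δ₂ := Finset.sum_le_sum (fun i hi => hy i hi)
    _ = (I.card : ℝ) * δ₂ := by simp [mul_comm]
  have hAB : |∑ i ∈ I, a i * b i| ≤ (I.card : ℝ) * (δ₁ * δ₂) := by
    calc |∑ i ∈ I, a i * b i| ≤ ∑ i ∈ I, |a i * b i| := Finset.abs_sum_le_sum_abs _ _
    _ ≤ ∑ i ∈ I, δ₁ * δ₂ := Finset.sum_le_sum (fun i hi => by
        rw [abs_mul]
        exact mul_le_mul (hx i hi) (hy i hi) (abs_nonneg _) hδ₁)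
    _ = (I.card : ℝ) * (δ₁ * δ₂) := by simp [mul_comm]
  have h2 : |(∑ i ∈ I, a i) * (∑ i ∈ I, b i) / (I.card : ℝ)| ≤ (I.card : ℝ) * (δ₁ * δ₂) := by
    rw [abs_div, abs_mul, abs_of_pos hn, div_le_iff₀ hn]
    calc |∑ i ∈ I, a i| * |∑ i ∈ I, b i| ≤ ((I.card : ℝ) * δ₁) * ((I.card : ℝ) * δ₂) :=
      mul_le_mul hA hB (abs_nonneg _) (by positivity)
    _ = (I.card : ℝ) * (δ₁ * δ₂) * (I.card : ℝ) := by ring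
  calc |(∑ i ∈ I, a i * b i) - (∑ i ∈ I, a i) * (∑ i ∈ I, b i) / (I.card : ℝ)|
      ≤ |∑ i ∈ I, a i * b i| + |(∑ i ∈ I, a i) * (∑ i ∈ I, b i) / (I.card : ℝ)| :=
        abs_sub _ _
    _ ≤ (I.card : ℝ) * (δ₁ * δ₂) + (I.card : ℝ) * (δ₁ * δ₂) := add_le_add hAB h2
    _ = 2 * (I.card : ℝ) * δ₁ * δ₂ := by ring
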